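/- The following upper bound holds: ∫_{-∞}^{∞} q'(s)² ds ≤ 2·√(3·A³·μ² / (1 + 3aA)). -/

import Mathlib

open MeasureTheory Filter Real
open Topology

set_option maxHeartbeats 1000000 in
theorem stmt_14 (a μ A : ℝ) (ha : 0 < a) (hμ : 1 / 3 < μ) (hA : 0 < A)
    (q : ℝ → ℝ) (hq : ContDiff ℝ 2 q)
    (hode : ∀ s : ℝ, deriv (deriv q) s * q s + a * s * deriv q s * q s
      + μ * q s + (1 / 3) * s * deriv q s = 0)
    (hq0 : q 0 = A) (hq0' : deriv q 0 = 0)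
    (hpos : ∀ s : ℝ, 0 < q s)
    (heven : ∀ s : ℝ, q (-s) = q s)
    (hanti : StrictAntiOn q (Set.Ioi 0))
    (hlim : Tendsto q atTop (nhds 0)) (hlim' : Tendsto (deriv q) atTop (nhds 0))
    (hintd : Integrable (fun s : ℝ => deriv q s ^ 2)) :
    ∫ s : ℝ, deriv q s ^ 2
      ≤ 2 * Real.sqrt (3 * A ^ 3 * μ ^ 2 / (1 + 3 * a * A)) := by
  have hμ0 : 0 < μ := lt_trans (by norm_num) hμ
  have hden : 0 < 1 + 3 * a * A := by positivity
  set M := Real.sqrt (3 * μ ^ 2 * A / (1 + 3 * a * A)) with hMdef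
  have hM2 : M ^ 2 = 3 * μ ^ 2 * A / (1 + 3 * a * A) :=
    Real.sq_sqrt (by positivity)
  have hM2' : M ^ 2 * (1 + 3 * a * A) = 3 * μ ^ 2 * A := by
    rw [hM2]; field_simp
  have hMpos : 0 < M := Real.sqrt_pos.mpr (by positivity)
  -- differentiability facts
  have hqd : Differentiable ℝ q := hq.differentiable (by norm_num)
  have hq1 : ContDiff ℝ 1 (deriv q) := by
    have h2 : ((2 : ℕ∞) : WithTop ℕ∞) = (1 : WithTop ℕ∞) + 1 := by norm_num
    have := (contDiff_succ_iff_deriv (n := 1)).mp (by exact_mod_cast hq)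
    exact this.2.2
  have hq'd : Differentiable ℝ (deriv q) := hq1.differentiable one_ne_zero
  have hq'c : Continuous (deriv q) := hq'd.continuous
  -- oddness of deriv q
  have hodd : ∀ s : ℝ, deriv q (-s) = -deriv q s := by
    intro s
    have h1 : deriv (fun x => q (-x)) s = -deriv q (-s) := deriv_comp_neg q s
    have h2 : (fun x : ℝ => q (-x)) = q := funext heven
    rw [h2] at h1
    linarith
  -- deriv q ≤ 0 on [0, ∞)
  have hderiv_nonpos : ∀ s : ℝ, 0 ≤ s → deriv q s ≤ 0 := by
    intro s hs
    rcases eq_or_lt_of_le hs with h | h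
    · rw [← h, hq0']
    · have hd : Tendsto (slope q s) (𝓝[>] s) (𝓝 (deriv q s)) :=
        (hasDerivAt_iff_tendsto_slope.mp (hqd s).hasDerivAt).mono_left
          (nhdsWithin_mono _ fun x hx => (LT.lt.ne' hx : x ≠ s))
      refine le_of_tendsto hd ?_
      filter_upwards [self_mem_nhdsWithin] with t ht
      have hts : s < t := ht
      have hlt : q t < q s := hanti h (lt_trans h hts) hts
      rw [slope_def_field]
      apply div_nonpos_of_nonpos_of_nonneg <;> linarith
  -- q ≤ A on [0, ∞)
  have hqA : ∀ s : ℝ, 0 ≤ s → q s ≤ A := by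
    have hmono : AntitoneOn q (Set.Ici 0) := by
      apply antitoneOn_of_deriv_nonpos (convex_Ici 0) hqd.continuous.continuousOn
        (fun x _ => (hqd x).differentiableWithinAt)
      intro x hx
      rw [interior_Ici] at hx
      exact hderiv_nonpos x (le_of_lt hx)
    intro s hs
    have := hmono (Set.self_mem_Ici) hs hs
    rwa [hq0] at this
  -- -deriv q s ≤ μ s on [0, ∞)
  have hle : ∀ s : ℝ, 0 ≤ s → -deriv q s ≤ μ * s := by
    have hg : MonotoneOn (fun s => μ * s + deriv q s) (Set.Ici 0) := by
      apply monotoneOn_of_deriv_nonneg (convex_Ici 0)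
      · exact ((continuous_const.mul continuous_id).add hq'c).continuousOn
      · intro x _
        exact (((differentiable_const μ).mul differentiable_id).add hq'd).differentiableAt
          |>.differentiableWithinAt
      · intro x hx
        rw [interior_Ici] at hx
        have hder : deriv (fun s => μ * s + deriv q s) x
            = μ + deriv (deriv q) x := by
          have h1 : HasDerivAt (fun s : ℝ => μ * s + deriv q s)
              (μ * 1 + deriv (deriv q) x) x :=
            ((hasDerivAt_id x).const_mul μ).add (hq'd x).hasDerivAt
          simpa using h1.deriv
        rw [hder]
        -- from the ODE : deriv (deriv q) x ≥ -μ
        have he := hode x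
        have hqx := hpos x
        have hq'x := hderiv_nonpos x hx.le
        nlinarith [mul_nonneg (mul_nonneg ha.le hx.le) (mul_nonneg (neg_nonneg.mpr hq'x) hqx.le),
          mul_nonneg hx.le (neg_nonneg.mpr hq'x)]
    intro s hs
    have := hg (Set.self_mem_Ici) hs hs
    simp only [mul_zero, zero_add, hq0'] at this
    linarith
  -- key pointwise bound : -deriv q s ≤ M for s ≥ 0
  have key : ∀ s : ℝ, 0 ≤ s → -deriv q s ≤ M := by
    by_contra hcon
    push_neg at hcon
    obtain ⟨s₀, hs₀, hMs₀⟩ := hcon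
    have hev : ∀ᶠ s in atTop, -M < deriv q s :=
      hlim'.eventually (eventually_gt_nhds (by linarith))
    obtain ⟨R, hR⟩ := eventually_atTop.mp hev
    set R' := max R (s₀ + 1) with hR'def
    have hR'pos : 0 < R' := lt_of_lt_of_le (by linarith) (le_max_right _ _)
    obtain ⟨c, hcmem, hcmax⟩ :=
      (isCompact_Icc (a := (0:ℝ)) (b := R')).exists_isMaxOn ⟨0, Set.left_mem_Icc.mpr hR'pos.le⟩
        (hq'c.neg.continuousOn)
    have hs₀mem : s₀ ∈ Set.Icc 0 R' := ⟨hs₀, le_trans (by linarith) (le_max_right _ _)⟩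
    have hcbig : M < -deriv q c := lt_of_lt_of_le hMs₀ (hcmax hs₀mem)
    have hc0 : 0 < c := by
      rcases eq_or_lt_of_le hcmem.1 with h | h
      · exfalso; rw [← h, hq0'] at hcbig; simp at hcbig; linarith
      · exact h
    have hcR' : c < R' := by
      rcases eq_or_lt_of_le hcmem.2 with h | h
      · exfalso
        have : -M < deriv q c := hR c (by rw [h]; exact le_max_left _ _)
        linarith
      · exact h
    have hlocal : IsLocalMax (fun s => -deriv q s) c :=
      hcmax.isLocalMax (Icc_mem_nhds hc0 hcR')
    have hq''c : deriv (deriv q) c = 0 := by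
      have := hlocal.deriv_eq_zero
      rw [deriv.fun_neg] at this
      linarith
    -- ODE at c
    have he := hode c
    rw [hq''c] at he
    -- he : 0 * q c + a * c * deriv q c * q c + μ * q c + 1/3 * c * deriv q c = 0
    obtain ⟨t, htdef⟩ : ∃ t : ℝ, t = -deriv q c := ⟨_, rfl⟩
    rw [← htdef] at hcbig
    have he' : (a * q c + 1 / 3) * c * t = μ * q c := by
      rw [htdef]; ring_nf; ring_nf at he; linarith
    have ht_le : t ≤ μ * c := htdef ▸ hle c hc0.le
    have hqcA : q c ≤ A := hqA c hc0.le
    have hqc : 0 < q c := hpos c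
    -- t^2 * (a * q c + 1/3) ≤ μ^2 * q c
    have h6 : t ^ 2 * (a * q c + 1 / 3) * c = t * (μ * q c) := by
      nlinarith [he']
    have h7 : t * (μ * q c) ≤ (μ * c) * (μ * q c) :=
      mul_le_mul_of_nonneg_right ht_le (by positivity)
    have h8 : t ^ 2 * (a * q c + 1 / 3) ≤ μ ^ 2 * q c := by
      have h9 : t ^ 2 * (a * q c + 1 / 3) * c ≤ (μ ^ 2 * q c) * c := by
        calc t ^ 2 * (a * q c + 1 / 3) * c = t * (μ * q c) := h6
          _ ≤ (μ * c) * (μ * q c) := h7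
          _ = (μ ^ 2 * q c) * c := by ring
      exact le_of_mul_le_mul_right h9 hc0
    -- conclude contradiction
    have hM2lt : M ^ 2 < t ^ 2 := by nlinarith [hMpos, hcbig]
    have step1 : t ^ 2 * (1 + 3 * a * q c) ≤ 3 * (μ ^ 2 * q c) := by linarith [h8]
    have step2 : 3 * μ ^ 2 * q c * (1 + 3 * a * A) ≤ 3 * μ ^ 2 * A * (1 + 3 * a * q c) := by
      nlinarith [mul_le_mul_of_nonneg_left hqcA (by positivity : (0:ℝ) ≤ 3 * μ ^ 2)]
    have s3a := mul_le_mul_of_nonneg_right step1 hden.le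
    have hM3 : 3 * μ ^ 2 * A * (1 + 3 * a * q c) = M ^ 2 * ((1 + 3 * a * q c) * (1 + 3 * a * A)) := by
      linear_combination (-(1 + 3 * a * q c)) * hM2'
    have hpp : 0 < (1 + 3 * a * q c) * (1 + 3 * a * A) := by positivity
    have t2le : t ^ 2 ≤ M ^ 2 := le_of_mul_le_mul_right (by nlinarith [s3a, step2, hM3]) hpp
    linarith
  -- integrability and value of ∫_{Ioi 0} (-deriv q)
  have hderneg : ∀ x ∈ Set.Ici (0:ℝ), HasDerivAt (fun s => -q s) (-deriv q x) x :=
    fun x _ => ((hqd x).hasDerivAt).neg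
  have hneglim : Tendsto (fun s => -q s) atTop (nhds 0) := by
    simpa using hlim.neg
  have hpos' : ∀ x ∈ Set.Ioi (0:ℝ), 0 ≤ -deriv q x :=
    fun x hx => neg_nonneg.mpr (hderiv_nonpos x (le_of_lt hx))
  have hint1 : IntegrableOn (fun s => -deriv q s) (Set.Ioi 0) :=
    integrableOn_Ioi_deriv_of_nonneg' hderneg hpos' hneglim
  have hval : ∫ s in Set.Ioi (0:ℝ), -deriv q s = A := by
    have := integral_Ioi_of_hasDerivAt_of_nonneg' hderneg hpos' hneglim
    rw [this, hq0]; ring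
  -- bound on the half-line integral
  have hbound : ∫ s in Set.Ioi (0:ℝ), deriv q s ^ 2 ≤ M * A := by
    have hmono : ∫ s in Set.Ioi (0:ℝ), deriv q s ^ 2
        ≤ ∫ s in Set.Ioi (0:ℝ), M * (-deriv q s) := by
      apply setIntegral_mono_on hintd.integrableOn (hint1.const_mul M) measurableSet_Ioi
      intro x hx
      have h1 : -deriv q x ≤ M := key x (le_of_lt hx)
      have h2 : 0 ≤ -deriv q x := hpos' x hx
      nlinarith
    calc ∫ s in Set.Ioi (0:ℝ), deriv q s ^ 2
        ≤ ∫ s in Set.Ioi (0:ℝ), M * (-deriv q s) := hmono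
      _ = M * ∫ s in Set.Ioi (0:ℝ), -deriv q s := integral_const_mul _ _
      _ = M * A := by rw [hval]
  -- evenness : split the integral
  have hsplit : ∫ s : ℝ, deriv q s ^ 2 = 2 * ∫ s in Set.Ioi (0:ℝ), deriv q s ^ 2 := by
    have h1 : ∫ s in Set.Iic (0:ℝ), deriv q s ^ 2 = ∫ s in Set.Ioi (0:ℝ), deriv q s ^ 2 := by
      calc ∫ s in Set.Iic (0:ℝ), deriv q s ^ 2
          = ∫ s in Set.Iic (0:ℝ), deriv q (-s) ^ 2 := by
            refine (setIntegral_congr_fun measurableSet_Iic fun s _ => ?_)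
            rw [hodd]; ring
        _ = ∫ s in Set.Ioi (-(0:ℝ)), deriv q s ^ 2 := integral_comp_neg_Iic (0:ℝ) (fun s => deriv q s ^ 2)
        _ = ∫ s in Set.Ioi (0:ℝ), deriv q s ^ 2 := by norm_num
    have h2 : (∫ s in Set.Iic (0:ℝ), deriv q s ^ 2) + ∫ s in (Set.Iic (0:ℝ))ᶜ, deriv q s ^ 2
        = ∫ s : ℝ, deriv q s ^ 2 := integral_add_compl measurableSet_Iic hintd
    rw [Set.compl_Iic] at h2
    rw [← h2, h1]; ring
  -- conclude
  have hMA : Real.sqrt (3 * A ^ 3 * μ ^ 2 / (1 + 3 * a * A)) = M * A := by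
    rw [show 3 * A ^ 3 * μ ^ 2 / (1 + 3 * a * A)
        = (3 * μ ^ 2 * A / (1 + 3 * a * A)) * A ^ 2 by field_simp,
      Real.sqrt_mul (by positivity), Real.sqrt_sq hA.le, hMdef]
  rw [hsplit, hMA]
  linarith
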